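/- arXiv:2009.04520 — 2 statements merged into one kernel-verified Lean document; each statement's English description precedes it below -/
import Mathlib

section
/- The derivatives at z = 1 of the diagonal Green functions are uniformly bounded: sup_{x∈V} G′(x,x|1) < ∞, where G′(x,x|1) = Σ_{n≥1} n·p^{(n)}(x,x) is the derivative of z ↦ G(x,x|z) at z = 1. -/
open MeasureTheory Filter
open scoped ENNReal NNReal Classical

/-- Setup for a free product of two graphs `V₁ ∗ V₂`: two disjoint countable vertex
sets with roots, each with at least two elements, transition matrices whose rows sum
to one, every vertex reachable from the root, a uniform positive lower bound `ε₀` on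
the positive entries, and a mixing parameter `α ∈ (0,1)`. -/
structure Setup (V₁ : Type) (V₂ : Type) [Countable V₁] [Countable V₂]
    [DecidableEq V₁] [DecidableEq V₂] where
  o₁ : V₁
  o₂ : V₂
  nontrivial₁ : ∃ x : V₁, x ≠ o₁
  nontrivial₂ : ∃ x : V₂, x ≠ o₂
  p₁ : V₁ → V₁ → ℝ
  p₂ : V₂ → V₂ → ℝ
  p₁_nonneg : ∀ x y, 0 ≤ p₁ x y
  p₂_nonneg : ∀ x y, 0 ≤ p₂ x y
  p₁_rowSum : ∀ x, HasSum (p₁ x) 1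
  p₂_rowSum : ∀ x, HasSum (p₂ x) 1
  /-- every vertex of `V₁` is reachable from the root `o₁` with positive probability -/
  acc₁ : ∀ x : V₁, ∃ l : List V₁, List.Chain (fun u v => 0 < p₁ u v) o₁ l ∧
    (o₁ :: l).getLast (List.cons_ne_nil _ _) = x
  acc₂ : ∀ x : V₂, ∃ l : List V₂, List.Chain (fun u v => 0 < p₂ u v) o₂ l ∧
    (o₂ :: l).getLast (List.cons_ne_nil _ _) = x
  ε₀ : ℝ
  ε₀_pos : 0 < ε₀
  ε₀_le₁ : ∀ x y, 0 < p₁ x y → ε₀ ≤ p₁ x y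
  ε₀_le₂ : ∀ x y, 0 < p₂ x y → ε₀ ≤ p₂ x y
  α : ℝ
  α_pos : 0 < α
  α_lt_one : α < 1

namespace Setup

variable {V₁ V₂ : Type} [Countable V₁] [Countable V₂] [DecidableEq V₁] [DecidableEq V₂]
variable (S : Setup V₁ V₂)

/-- A letter of the free product: an element of `V₁^× = V₁ ∖ {o₁}` or of `V₂^× = V₂ ∖ {o₂}`. -/
def Letter : Type := {x : V₁ // x ≠ S.o₁} ⊕ {x : V₂ // x ≠ S.o₂}

instance : DecidableEq S.Letter :=
  inferInstanceAs (DecidableEq ({x : V₁ // x ≠ S.o₁} ⊕ {x : V₂ // x ≠ S.o₂}))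
instance : Countable S.Letter :=
  inferInstanceAs (Countable ({x : V₁ // x ≠ S.o₁} ⊕ {x : V₂ // x ≠ S.o₂}))

/-- the factor a letter belongs to: `true` for `V₁^×`, `false` for `V₂^×`. -/
def ltype : S.Letter → Bool := Sum.elim (fun _ => true) (fun _ => false)

/-- An element of the free product `V = V₁ ∗ V₂`: a finite word over the alphabet
`V₁^× ∪ V₂^×` in which no two consecutive letters lie in the same factor. -/
def Word : Type := {l : List S.Letter // l.Chain' fun a b => S.ltype a ≠ S.ltype b}

instance : DecidableEq S.Word :=
  inferInstanceAs (DecidableEq {l : List S.Letter // l.Chain' fun a b => S.ltype a ≠ S.ltype b})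
instance : Countable S.Word :=
  inferInstanceAs (Countable {l : List S.Letter // l.Chain' fun a b => S.ltype a ≠ S.ltype b})
instance : MeasurableSpace S.Word := ⊤

/-- the empty word `o`. -/
def emp : S.Word := ⟨[], List.isChain_nil⟩

/-- word length `‖u‖`. -/
def wlen (u : S.Word) : ℕ := u.val.length

/-- the last letter `[u]` of a word (`none` for the empty word). -/
def lastLetter (u : S.Word) : Option S.Letter := u.val.getLast?

/-- the type `τ(u)` of a word: the factor of its last letter (`none` for `o`). -/
def wtype (u : S.Word) : Option Bool := (u.val.getLast?).map S.ltype

/-- the factor of the first letter of a word (`none` for `o`). -/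
def firstType (u : S.Word) : Option Bool := (u.val.head?).map S.ltype

/-- the cone `C(x)`: all words having `x` as a prefix. -/
def cone (x : S.Word) : Set S.Word := {y | x.val <+: y.val}

/-- the one-letter word determined by a letter. -/
def single (g : S.Letter) : S.Word := ⟨[g], List.isChain_singleton g⟩

/-- the word `u` with its last letter removed in case that letter lies in factor `i`
(so `u = (stripLast i u)·v` with `v ∈ Vᵢ`). -/
def stripLast (i : Bool) (u : S.Word) : List S.Letter :=
  if (u.val.getLast?).map S.ltype = some i then u.val.dropLast else u.val

/-- the `V₁`-component of the last letter of `u` (`o₁` if the last letter is not in `V₁^×`). -/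
def lastIn₁ (u : S.Word) : V₁ :=
  ((u.val.getLast?).map (Sum.elim Subtype.val fun _ => S.o₁)).getD S.o₁

/-- the `V₂`-component of the last letter of `u` (`o₂` if the last letter is not in `V₂^×`). -/
def lastIn₂ (u : S.Word) : V₂ :=
  ((u.val.getLast?).map (Sum.elim (fun _ => S.o₂) Subtype.val)).getD S.o₂

/-- the lift `p̄₁` of `P₁` to the free product: `p̄₁(xv,xw) = p₁(v,w)` for `v,w ∈ V₁`. -/
def pbar₁ (u w : S.Word) : ℝ :=
  if S.stripLast true u = S.stripLast true w then S.p₁ (S.lastIn₁ u) (S.lastIn₁ w) else 0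

/-- the lift `p̄₂` of `P₂` to the free product. -/
def pbar₂ (u w : S.Word) : ℝ :=
  if S.stripLast false u = S.stripLast false w then S.p₂ (S.lastIn₂ u) (S.lastIn₂ w) else 0

/-- the single-step transition probabilities `P = α·P̄₁ + (1−α)·P̄₂` of the random walk. -/
def step (u w : S.Word) : ℝ := S.α * S.pbar₁ u w + (1 - S.α) * S.pbar₂ u w

/-- single-step transition probabilities, as extended nonnegative reals. -/
noncomputable def stepE (u w : S.Word) : ℝ≥0∞ := ENNReal.ofReal (S.step u w)

/-- the `n`-step transition probabilities `p^{(n)}(x,y)`. -/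
noncomputable def pn : ℕ → S.Word → S.Word → ℝ≥0∞
  | 0, u, w => if u = w then 1 else 0
  | n + 1, u, w => ∑' v : S.Word, pn n u v * S.stepE v w

/-- `G′(x,x|1) = Σ_{n≥1} n·p^{(n)}(x,x)`, the derivative at `z = 1` of the Green
function `G(x,x|z)`. -/
noncomputable def Gderiv (x : S.Word) : ℝ≥0∞ := ∑' n : ℕ, (n : ℝ≥0∞) * S.pn n x x

/-- the assumption that all Green functions `G(x,y|z) = Σ p^{(n)}(x,y) zⁿ` have radius
of convergence at least `R` for some `R > 1`. -/
def GreenRadiusGT1 : Prop :=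
  ∃ R : ℝ≥0, 1 < R ∧ ∀ x y : S.Word, ∀ r : ℝ≥0, r < R →
    (∑' n : ℕ, S.pn n x y * (r : ℝ≥0∞) ^ n) ≠ ⊤

/-- `fvisit n y x` is the probability, starting at `y`, that the first visit to `x`
occurs exactly at time `n`. -/
noncomputable def fvisit : ℕ → S.Word → S.Word → ℝ≥0∞
  | 0, y, x => if y = x then 1 else 0
  | n + 1, y, x => if y = x then 0 else ∑' z : S.Word, S.stepE y z * fvisit n z x

/-- `U(x,x)`: the probability of returning to `x` when starting at `x`. -/
noncomputable def Uret (x : S.Word) : ℝ≥0∞ :=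
  ∑' n : ℕ, ∑' z : S.Word, S.stepE x z * S.fvisit n z x

/-- the exit times: `e₀ = 0` and `e_k = inf{m > e_{k−1} : ‖Xₙ‖ ≥ k for all n ≥ m}`
(`0` by convention if no such time exists). -/
noncomputable def eT : ℕ → (ℕ → S.Word) → ℕ
  | 0, _ => 0
  | k + 1, ω => sInf {m | eT k ω < m ∧ ∀ n ≥ m, k + 1 ≤ S.wlen (ω n)}

/-- `W_k = [X_{e_k}]`, the `k`-th stabilized letter. -/
noncomputable def Wlast (k : ℕ) (ω : ℕ → S.Word) : Option S.Letter :=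
  S.lastLetter (ω (S.eT k ω))

/-- the set of vertices visited up to time `n`. -/
def visited (n : ℕ) (ω : ℕ → S.Word) : Set S.Word := {x | ∃ j ≤ n, ω j = x}

/-- the shift `x⁻¹A` deleting the prefix `x` from each element of `A ⊆ C(x)`. -/
def wshift (x : S.Word) (A : Set S.Word) : Set S.Word := {y | ∃ a ∈ A, a.val = x.val ++ y.val}

/-- (the support of) `ψ_k`: for `k ≥ 2` the set obtained from
`{X₀,…,X_{e_k}} ∩ C(X_{e_{k−1}})` by deleting the prefix `X_{e_{k−1}}`; for `k = 1`
the set `{X₀,…,X_{e₁}} ∩ V*_{τ(X_{e₁})}`. -/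
noncomputable def psi (k : ℕ) (ω : ℕ → S.Word) : Set S.Word :=
  if k = 1 then
    {x | x ∈ S.visited (S.eT 1 ω) ω ∧ (x = S.emp ∨ S.firstType x = S.wtype (ω (S.eT 1 ω)))}
  else
    S.wshift (ω (S.eT (k - 1) ω)) (S.visited (S.eT k ω) ω ∩ S.cone (ω (S.eT (k - 1) ω)))

/-- the range `Rₙ = |{X₀,…,Xₙ}|`. -/
noncomputable def rangeCount (n : ℕ) (ω : ℕ → S.Word) : ℕ :=
  ((Finset.range (n + 1)).image ω).card

/-- the maximal exit time index `k(n) = max{k : e_k ≤ n}`. -/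
noncomputable def kmax (n : ℕ) (ω : ℕ → S.Word) : ℕ := sSup {k | S.eT k ω ≤ n}

end Setup

/-- A family of Markov measures for the random walk on the free product:
`P x` is the law of the walk started at `x`, so that the probability of any cylinder
`[X₀ = w₀, …, Xₙ = wₙ]` equals `δ_x(w₀)·∏ p(wᵢ, wᵢ₊₁)`. -/
structure RW {V₁ V₂ : Type} [Countable V₁] [Countable V₂] [DecidableEq V₁] [DecidableEq V₂]
    (S : Setup V₁ V₂) where
  P : S.Word → Measure (ℕ → S.Word)
  prob : ∀ x, IsProbabilityMeasure (P x)
  cyl : ∀ (x : S.Word) (n : ℕ) (w : Fin (n + 1) → S.Word),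
    P x {ω | ∀ i : Fin (n + 1), ω (i : ℕ) = w i} =
      (if w 0 = x then 1 else 0) * ∏ i : Fin n, S.stepE (w i.castSucc) (w i.succ)

namespace Setup

variable {V₁ V₂ : Type} [Countable V₁] [Countable V₂] [DecidableEq V₁] [DecidableEq V₂]
variable (S : Setup V₁ V₂)

/-- `ξᵢ = P[∃ n ≥ 1 : Xₙ ∈ Vᵢ^×]` (for the walk started at `o`). -/
noncomputable def xi (X : RW S) (i : Bool) : ℝ≥0∞ :=
  X.P S.emp {ω | ∃ n, 1 ≤ n ∧ S.wlen (ω n) = 1 ∧ S.wtype (ω n) = some i}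

/-- `D_k`, the support of `(W_k, ψ_k)`. -/
noncomputable def Dsupp (X : RW S) (k : ℕ) : Set (S.Letter × Set S.Word) :=
  {gf | 0 < X.P S.emp {ω | S.Wlast k ω = some gf.1 ∧ S.psi k ω = gf.2}}

/-- the event `[(W₁,ψ₁) = s₁, …, (W_k,ψ_k) = s_k]`. -/
noncomputable def histEvent (k : ℕ) (s : ℕ → S.Letter × Set S.Word) : Set (ℕ → S.Word) :=
  {ω | ∀ j, 1 ≤ j → j ≤ k → S.Wlast j ω = some (s j).1 ∧ S.psi j ω = (s j).2}

/-- `q` is a (homogeneous) transition kernel for the process `(W_k, ψ_k)_{k≥1}`: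
the conditional probability of the next state given the whole history depends only on
the current and the next state, via `q`. -/
def IsExitKernel (X : RW S) (q : S.Letter × Set S.Word → S.Letter × Set S.Word → ℝ≥0∞) : Prop :=
  ∀ k, 1 ≤ k → ∀ s : ℕ → S.Letter × Set S.Word,
    0 < X.P S.emp (S.histEvent k s) →
    X.P S.emp (S.histEvent (k + 1) s) = X.P S.emp (S.histEvent k s) * q (s k) (s (k + 1))

/-- `R̃₁` as a function of the state `(g,f)`: `|supp f ∖ C(g)|`. -/
noncomputable def RtilFun (gf : S.Letter × Set S.Word) : ℝ≥0∞ :=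
  ((gf.2 \ S.cone (S.single gf.1)).encard : ℝ≥0∞)

/-- `O₁` as a function of the state `(g,f)`: `|supp f ∩ C(g)|`. -/
noncomputable def OverFun (gf : S.Letter × Set S.Word) : ℝ≥0∞ :=
  ((gf.2 ∩ S.cone (S.single gf.1)).encard : ℝ≥0∞)

/-- cone of an optional letter. -/
def coneOpt : Option S.Letter → Set S.Word
  | some g => S.cone (S.single g)
  | none => ∅

/-- the overhead `O_k = |supp(ψ_k) ∩ C(W_k)|`. -/
noncomputable def Ocount (k : ℕ) (ω : ℕ → S.Word) : ℝ≥0∞ :=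
  ((S.psi k ω ∩ S.coneOpt (S.Wlast k ω)).encard : ℝ≥0∞)

/-- `|supp(ψ_k)|`. -/
noncomputable def psiCount (k : ℕ) (ω : ℕ → S.Word) : ℝ≥0∞ :=
  ((S.psi k ω).encard : ℝ≥0∞)

end Setup

/-- `n`-step transition powers of a kernel `q` on a countable state space. -/
noncomputable def kpow {σ : Type} (q : σ → σ → ℝ≥0∞) : ℕ → σ → σ → ℝ≥0∞
  | 0, s, t => if s = t then 1 else 0
  | n + 1, s, t => ∑' u : σ, kpow q n s u * q u t

/-- `π` is an invariant (stationary) probability measure, supported on `D`, of the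
chain with transition kernel `q`. -/
def IsStationaryKernel {σ : Type} (q : σ → σ → ℝ≥0∞) (D : Set σ) (π : σ → ℝ≥0∞) : Prop :=
  (∑' s : σ, π s) = 1 ∧ (∀ s, s ∉ D → π s = 0) ∧ ∀ t, (∑' s : σ, π s * q s t) = π t

section Aux

variable {V₁ V₂ : Type} [Countable V₁] [Countable V₂] [DecidableEq V₁] [DecidableEq V₂]
variable (S : Setup V₁ V₂)

/-- Chapman–Kolmogorov for the n-step transition probabilities. -/
lemma pn_add (m : ℕ) : ∀ (n : ℕ) (x y : S.Word),
    S.pn (m + n) x y = ∑' v : S.Word, S.pn m x v * S.pn n v y := by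
  intro n
  induction n with
  | zero =>
    intro x y
    simp only [Nat.add_zero, Setup.pn]
    rw [tsum_eq_single y]
    · simp
    · intro v hv
      simp [hv]
  | succ n ih =>
    intro x y
    have h1 : m + (n + 1) = (m + n) + 1 := by ring
    rw [h1]
    show (∑' v : S.Word, S.pn (m + n) x v * S.stepE v y) = _
    calc (∑' v : S.Word, S.pn (m + n) x v * S.stepE v y)
        = ∑' v : S.Word, (∑' u : S.Word, S.pn m x u * S.pn n u v) * S.stepE v y := by
          simp only [ih]
      _ = ∑' v : S.Word, ∑' u : S.Word, S.pn m x u * S.pn n u v * S.stepE v y := by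
          congr 1; funext v; rw [ENNReal.tsum_mul_right]
      _ = ∑' u : S.Word, ∑' v : S.Word, S.pn m x u * (S.pn n u v * S.stepE v y) := by
          rw [ENNReal.tsum_comm]; simp only [mul_assoc]
      _ = ∑' u : S.Word, S.pn m x u * ∑' v : S.Word, S.pn n u v * S.stepE v y := by
          congr 1; funext u; rw [ENNReal.tsum_mul_left]
      _ = ∑' u : S.Word, S.pn m x u * S.pn (n + 1) u y := rfl

lemma pn_supermul (m n : ℕ) (x : S.Word) :
    S.pn m x x * S.pn n x x ≤ S.pn (m + n) x x := by
  rw [pn_add S m n x x]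
  exact ENNReal.le_tsum x

/-- Uniform bound `p^{(n)}(x,x) rⁿ ≤ 1` from finiteness of the Green function at `r`. -/
lemma pn_rpow_le_one (x : S.Word) (r : ℝ≥0)
    (hfin : (∑' n : ℕ, S.pn n x x * (r : ℝ≥0∞) ^ n) ≠ ⊤) (n : ℕ) :
    S.pn n x x * (r : ℝ≥0∞) ^ n ≤ 1 := by
  by_contra hlt
  push_neg at hlt
  set a : ℕ → ℝ≥0∞ := fun n => S.pn n x x * (r : ℝ≥0∞) ^ n with ha
  have hm1 : (1 : ℝ≥0∞) ≤ a n := le_of_lt hlt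
  have hn0 : n ≠ 0 := by
    rintro rfl
    simp [ha, Setup.pn] at hlt
  -- a ((k+1)*n) ≥ 1 for all k
  have hiter : ∀ k : ℕ, (1 : ℝ≥0∞) ≤ a ((k + 1) * n) := by
    intro k
    induction k with
    | zero => simpa using hm1
    | succ k ih =>
      have hstep : a ((k + 1) * n) * a n ≤ a ((k + 1) * n + n) := by
        calc a ((k + 1) * n) * a n
            = (S.pn ((k + 1) * n) x x * S.pn n x x) * ((r : ℝ≥0∞) ^ ((k + 1) * n) * (r : ℝ≥0∞) ^ n) := by
              simp only [ha]; ring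
          _ ≤ S.pn ((k + 1) * n + n) x x * (r : ℝ≥0∞) ^ ((k + 1) * n + n) := by
              rw [← pow_add]
              exact mul_le_mul_left (pn_supermul S _ _ x) _
      have : (1 : ℝ≥0∞) * 1 ≤ a ((k + 1) * n + n) :=
        le_trans (mul_le_mul' ih hm1) hstep
      simpa [Nat.succ_mul, Nat.add_mul] using this
  have hinj : Function.Injective (fun k : ℕ => (k + 1) * n) := by
    intro k₁ k₂ h
    simp only at h
    exact Nat.succ_injective (Nat.eq_of_mul_eq_mul_right (Nat.pos_of_ne_zero hn0) h)
  have htop : (∑' n : ℕ, a n) = ⊤ := by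
    have h1 : (⊤ : ℝ≥0∞) = ∑' _ : ℕ, (1 : ℝ≥0∞) := by
      simp [ENNReal.tsum_const_eq_top_of_ne_zero one_ne_zero]
    have h2 : (∑' k : ℕ, (1 : ℝ≥0∞)) ≤ ∑' k : ℕ, a ((k + 1) * n) :=
      ENNReal.tsum_le_tsum hiter
    have h3 : (∑' k : ℕ, a ((k + 1) * n)) ≤ ∑' m : ℕ, a m :=
      ENNReal.tsum_comp_le_tsum_of_injective hinj a
    exact top_le_iff.mp (h1 ▸ le_trans h2 h3)
  exact hfin htop

end Aux

/-- `sup_{x∈V} G′(x,x|1) < ∞`, where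
`G′(x,x|1) = Σ_{n≥1} n·p^{(n)}(x,x)`. -/
theorem sup_Green_deriv_finite
    {V₁ V₂ : Type} [Countable V₁] [Countable V₂] [DecidableEq V₁] [DecidableEq V₂]
    (S : Setup V₁ V₂) (hG : S.GreenRadiusGT1) :
    (⨆ x : S.Word, S.Gderiv x) < ⊤ := by
  obtain ⟨R, hR1, hRad⟩ := hG
  set r : ℝ≥0 := (1 + R) / 2 with hr
  have h1r : 1 < r := by
    rw [hr, lt_div_iff₀ (by norm_num : (0:ℝ≥0) < 2)]
    calc (1 : ℝ≥0) * 2 = 1 + 1 := by norm_num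
      _ < 1 + R := by exact add_lt_add_right hR1 1
  have hrR : r < R := by
    rw [hr, div_lt_iff₀ (by norm_num : (0:ℝ≥0) < 2)]
    calc 1 + R < R + R := add_lt_add_left hR1 R
      _ = R * 2 := by ring
  have hr0 : r ≠ 0 := by positivity
  set t : ℝ≥0 := r⁻¹ with ht
  have ht1 : t < 1 := by
    rw [ht]
    exact inv_lt_one_of_one_lt₀ h1r
  -- the uniform constant C = Σ n tⁿ
  set C : ℝ≥0∞ := ∑' n : ℕ, (n : ℝ≥0∞) * (t : ℝ≥0∞) ^ n with hC
  have hCne : C ≠ ⊤ := by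
    have heq : ∀ n : ℕ, (n : ℝ≥0∞) * (t : ℝ≥0∞) ^ n = (((n : ℝ≥0) * t ^ n : ℝ≥0) : ℝ≥0∞) := by
      intro n
      push_cast
      ring
    rw [hC]
    simp only [heq]
    rw [ENNReal.tsum_coe_ne_top_iff_summable]
    rw [← NNReal.summable_coe]
    have : Summable (fun n : ℕ => (n : ℝ) ^ 1 * (t : ℝ) ^ n) := by
      apply summable_pow_mul_geometric_of_norm_lt_one
      rw [Real.norm_eq_abs, abs_of_nonneg t.coe_nonneg]
      exact_mod_cast ht1
    simpa using this
  have hbound : ∀ x : S.Word, S.Gderiv x ≤ C := by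
    intro x
    have hfin := hRad x x r hrR
    have hle : ∀ n : ℕ, S.pn n x x ≤ (t : ℝ≥0∞) ^ n := by
      intro n
      have h1 := pn_rpow_le_one S x r hfin n
      have hrn0 : ((r : ℝ≥0∞)) ^ n ≠ 0 := by
        apply pow_ne_zero
        exact_mod_cast hr0
      have hrntop : ((r : ℝ≥0∞)) ^ n ≠ ⊤ := ENNReal.pow_ne_top ENNReal.coe_ne_top
      have : S.pn n x x ≤ 1 / (r : ℝ≥0∞) ^ n :=
        (ENNReal.le_div_iff_mul_le (Or.inl hrn0) (Or.inl hrntop)).mpr h1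
      calc S.pn n x x ≤ 1 / (r : ℝ≥0∞) ^ n := this
        _ = (t : ℝ≥0∞) ^ n := by
            rw [ht, one_div, ENNReal.coe_inv hr0, ENNReal.inv_pow]
    rw [Setup.Gderiv, hC]
    exact ENNReal.tsum_le_tsum fun n => mul_le_mul_right (hle n) _
  calc (⨆ x : S.Word, S.Gderiv x) ≤ C := iSup_le hbound
    _ < ⊤ := hCne.lt_top
end

section
/- For every n ≥ 1 one has P(Aₙ) ≥ 1/8; consequently limsup_{n→∞} E[Rₙ]/n ≤ 1 − 1/24 = 23/24 < 1. In particular the asymptotic range of this random walk is strictly smaller than 1 − P[∃n ≥ 1 : Xₙ = o] = 1, so the group-case formula for the asymptotic range fails for general free products of graphs. -/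
open MeasureTheory Filter
open scoped ENNReal NNReal Classical

/-- `π` is an invariant (stationary) probability measure, supported on `D`, of the
chain with transition kernel `q`. -/
def IsStationaryDist {σ : Type} (q : σ → σ → ℝ≥0∞) (D : Set σ) (π : σ → ℝ≥0∞) : Prop :=
  (∑' s : σ, π s) = 1 ∧ (∀ s, s ∉ D → π s = 0) ∧ ∀ t, (∑' s : σ, π s * q s t) = π t

section AuxProofs

namespace Setup

variable {V₁ V₂ : Type} [Countable V₁] [Countable V₂] [DecidableEq V₁] [DecidableEq V₂]
variable (S : Setup V₁ V₂)

lemma measurableSet_word (s : Set S.Word) : MeasurableSet s := trivial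

/-- a letter from the second factor -/
def inr' (v : {x : V₂ // x ≠ S.o₂}) : S.Letter := Sum.inr v

/-- make a word from a list -/
def mkWord (l : List S.Letter) (h : l.Chain' fun a b => S.ltype a ≠ S.ltype b) : S.Word := ⟨l, h⟩

@[simp] lemma mkWord_val (l : List S.Letter) (h) : (S.mkWord l h).val = l := rfl

/-- weight of a finite path -/
noncomputable def pathWeight (x : S.Word) {N : ℕ} (w : Fin (N + 1) → S.Word) : ℝ≥0∞ :=
  (if w 0 = x then 1 else 0) * ∏ i : Fin N, S.stepE (w i.castSucc) (w i.succ)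

lemma measurableSet_cyl {N : ℕ} (w : Fin (N + 1) → S.Word) :
    MeasurableSet {ω : ℕ → S.Word | ∀ i : Fin (N + 1), ω (i : ℕ) = w i} := by
  have h : {ω : ℕ → S.Word | ∀ i : Fin (N + 1), ω (i : ℕ) = w i}
      = ⋂ i : Fin (N + 1), (fun ω : ℕ → S.Word => ω (i : ℕ)) ⁻¹' {w i} := by
    ext ω; simp [Set.mem_iInter]
  rw [h]
  exact MeasurableSet.iInter fun i => measurable_pi_apply (i : ℕ) (S.measurableSet_word {w i})

lemma P_eq_tsum (X : RW S) (x : S.Word) {N : ℕ} (F : Set (Fin (N + 1) → S.Word)) :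
    X.P x {ω | (fun i : Fin (N + 1) => ω (i : ℕ)) ∈ F}
      = ∑' w : F, S.pathWeight x (w : Fin (N + 1) → S.Word) := by
  have hset : {ω : ℕ → S.Word | (fun i : Fin (N + 1) => ω (i : ℕ)) ∈ F}
      = ⋃ w : F, {ω | ∀ i : Fin (N + 1), ω (i : ℕ) = (w : Fin (N + 1) → S.Word) i} := by
    ext ω
    simp only [Set.mem_setOf_eq, Set.mem_iUnion]
    constructor
    · intro h; exact ⟨⟨_, h⟩, fun i => rfl⟩
    · rintro ⟨w, hw⟩
      have h2 : (fun i : Fin (N + 1) => ω (i : ℕ)) = (w : Fin (N + 1) → S.Word) := funext hw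
      rw [h2]; exact w.2
  rw [hset, measure_iUnion ?_ fun w => S.measurableSet_cyl _]
  · exact tsum_congr fun w => by rw [X.cyl x N _]; rfl
  · intro w w' hne
    refine Set.disjoint_left.mpr fun ω h1 h2 => hne ?_
    exact Subtype.ext (funext fun i => ((h1 i).symm.trans (h2 i)))

lemma tsum_pathWeight (X : RW S) (x : S.Word) (N : ℕ) :
    ∑' w : Fin (N + 1) → S.Word, S.pathWeight x w = 1 := by
  have h := S.P_eq_tsum X x (Set.univ : Set (Fin (N + 1) → S.Word))
  have hu : {ω : ℕ → S.Word | (fun i : Fin (N + 1) => ω (i : ℕ))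
      ∈ (Set.univ : Set (Fin (N + 1) → S.Word))} = Set.univ := by
    ext ω; simp
  haveI := X.prob x
  rw [hu, measure_univ] at h
  rw [← tsum_univ fun w => S.pathWeight x w]
  exact h.symm

lemma tsum_snoc {α : Type} {N : ℕ} (g : (Fin (N + 2) → α) → ℝ≥0∞) :
    ∑' w : Fin (N + 2) → α, g w
      = ∑' (u : Fin (N + 1) → α) (v : α), g (Fin.snoc u v : Fin (N + 2) → α) := by
  let e : ((Fin (N + 1) → α) × α) ≃ (Fin (N + 2) → α) :=
    { toFun := fun p => Fin.snoc p.1 p.2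
      invFun := fun w => (Fin.init w, w (Fin.last _))
      left_inv := fun p => by simp
      right_inv := fun w => by simp }
  rw [← Equiv.tsum_eq e g, ENNReal.tsum_prod']
  rfl

lemma snoc_lt {α : Type} {m : ℕ} (u : Fin (m + 1) → α) (v : α) (j : ℕ) (h : j < m + 1)
    (h2 : j < m + 2) : (Fin.snoc u v : Fin (m + 2) → α) ⟨j, h2⟩ = u ⟨j, h⟩ := by
  have h3 : (⟨j, h2⟩ : Fin (m + 2)) = Fin.castSucc ⟨j, h⟩ := rfl
  rw [h3, Fin.snoc_castSucc]

lemma snoc_hi {α : Type} {m : ℕ} (u : Fin (m + 1) → α) (v : α) (h2 : m + 1 < m + 2) :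
    (Fin.snoc u v : Fin (m + 2) → α) ⟨m + 1, h2⟩ = v := by
  have h3 : (⟨m + 1, h2⟩ : Fin (m + 2)) = Fin.last (m + 1) := rfl
  rw [h3, Fin.snoc_last]

lemma pathWeight_snoc (x : S.Word) {N : ℕ} (u : Fin (N + 1) → S.Word) (v : S.Word) :
    S.pathWeight x (Fin.snoc u v : Fin (N + 2) → S.Word)
      = S.pathWeight x u * S.stepE (u (Fin.last N)) v := by
  unfold pathWeight
  rw [Fin.prod_univ_castSucc
    (fun i : Fin (N + 1) => S.stepE ((Fin.snoc u v : Fin (N + 2) → S.Word) i.castSucc)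
      ((Fin.snoc u v : Fin (N + 2) → S.Word) i.succ))]
  have h0 : (Fin.snoc u v : Fin (N + 2) → S.Word) 0 = u 0 := by
    have h : (0 : Fin (N + 2)) = Fin.castSucc 0 := rfl
    rw [h, Fin.snoc_castSucc]
  have hlast : S.stepE ((Fin.snoc u v : Fin (N + 2) → S.Word) (Fin.last N).castSucc)
      ((Fin.snoc u v : Fin (N + 2) → S.Word) (Fin.last N).succ) = S.stepE (u (Fin.last N)) v := by
    rw [Fin.snoc_castSucc, Fin.succ_last, Fin.snoc_last]
  have hmid : (fun i : Fin N =>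
      S.stepE ((Fin.snoc u v : Fin (N + 2) → S.Word) i.castSucc.castSucc)
        ((Fin.snoc u v : Fin (N + 2) → S.Word) i.castSucc.succ))
      = fun i : Fin N => S.stepE (u i.castSucc) (u i.succ) := by
    funext i
    rw [Fin.snoc_castSucc, Fin.succ_castSucc, Fin.snoc_castSucc]
  rw [h0, hlast, hmid, mul_assoc]

/-- probability of 3-step continuations satisfying a predicate -/
noncomputable def phi3 (G : S.Word → S.Word → S.Word → S.Word → Prop) (x : S.Word) : ℝ≥0∞ :=
  ∑' (v1 : S.Word) (v2 : S.Word) (v3 : S.Word),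
    if G x v1 v2 v3 then S.stepE x v1 * S.stepE v1 v2 * S.stepE v2 v3 else 0

lemma P_event4 (X : RW S) (N : ℕ) (G : S.Word → S.Word → S.Word → S.Word → Prop) :
    X.P S.emp {ω | G (ω N) (ω (N + 1)) (ω (N + 2)) (ω (N + 3))}
      = ∑' u : Fin (N + 1) → S.Word,
          S.pathWeight S.emp u * S.phi3 G (u (Fin.last N)) := by
  classical
  set F : Set (Fin (N + 3 + 1) → S.Word) :=
    {w | G (w ⟨N, by omega⟩) (w ⟨N + 1, by omega⟩) (w ⟨N + 2, by omega⟩) (w ⟨N + 3, by omega⟩)}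
    with hF
  have hset : {ω : ℕ → S.Word | G (ω N) (ω (N + 1)) (ω (N + 2)) (ω (N + 3))}
      = {ω | (fun i : Fin (N + 3 + 1) => ω (i : ℕ)) ∈ F} := rfl
  rw [hset, S.P_eq_tsum X S.emp F, tsum_subtype F fun w => S.pathWeight S.emp w]
  set f : (Fin (N + 3 + 1) → S.Word) → ℝ≥0∞ :=
    fun w => if w ∈ F then S.pathWeight S.emp w else 0 with hf
  have hind : ∀ w, F.indicator (fun w => S.pathWeight S.emp w) w = f w := fun w => by
    rw [hf, Set.indicator_apply]
  rw [tsum_congr hind]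
  have e1 : ∑' w : Fin (N + 2 + 2) → S.Word, f w
      = ∑' (u2 : Fin (N + 2 + 1) → S.Word) (v3 : S.Word),
          f (Fin.snoc u2 v3 : Fin (N + 2 + 2) → S.Word) :=
    tsum_snoc f
  have e2 : ∑' (u2 : Fin (N + 1 + 2) → S.Word) (v3 : S.Word),
        f (Fin.snoc u2 v3 : Fin (N + 1 + 3) → S.Word)
      = ∑' (u1 : Fin (N + 1 + 1) → S.Word) (v2 : S.Word) (v3 : S.Word),
          f (Fin.snoc (Fin.snoc u1 v2 : Fin (N + 1 + 2) → S.Word) v3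
              : Fin (N + 1 + 3) → S.Word) :=
    tsum_snoc fun u2 : Fin (N + 1 + 2) → S.Word =>
      ∑' v3 : S.Word, f (Fin.snoc u2 v3 : Fin (N + 1 + 3) → S.Word)
  have e3 : ∑' (u1 : Fin (N + 2) → S.Word) (v2 : S.Word) (v3 : S.Word),
        f (Fin.snoc (Fin.snoc u1 v2 : Fin (N + 3) → S.Word) v3 : Fin (N + 4) → S.Word)
      = ∑' (u : Fin (N + 1) → S.Word) (v1 : S.Word) (v2 : S.Word) (v3 : S.Word),
          f (Fin.snoc (Fin.snoc (Fin.snoc u v1 : Fin (N + 2) → S.Word) v2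
              : Fin (N + 3) → S.Word) v3 : Fin (N + 4) → S.Word) :=
    tsum_snoc fun u1 : Fin (N + 2) → S.Word =>
      ∑' (v2 : S.Word) (v3 : S.Word),
        f (Fin.snoc (Fin.snoc u1 v2 : Fin (N + 3) → S.Word) v3 : Fin (N + 4) → S.Word)
  refine (e1.trans (e2.trans e3)).trans ?_
  refine tsum_congr fun u => ?_
  have hval : ∀ v1 v2 v3 : S.Word,
      f (Fin.snoc (Fin.snoc (Fin.snoc u v1 : Fin (N + 2) → S.Word) v2
          : Fin (N + 3) → S.Word) v3 : Fin (N + 4) → S.Word)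
        = S.pathWeight S.emp u *
            (if G (u (Fin.last N)) v1 v2 v3 then
              S.stepE (u (Fin.last N)) v1 * S.stepE v1 v2 * S.stepE v2 v3 else 0) := by
    intro v1 v2 v3
    set w3 : Fin (N + 4) → S.Word :=
      (Fin.snoc (Fin.snoc (Fin.snoc u v1 : Fin (N + 2) → S.Word) v2
          : Fin (N + 3) → S.Word) v3 : Fin (N + 4) → S.Word) with hw3
    have c0 : w3 ⟨N, by omega⟩ = u (Fin.last N) := by
      rw [hw3, snoc_lt _ _ N (by omega), snoc_lt _ _ N (by omega), snoc_lt _ _ N (by omega)]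
      rfl
    have c1 : w3 ⟨N + 1, by omega⟩ = v1 := by
      rw [hw3, snoc_lt _ _ (N + 1) (by omega), snoc_lt _ _ (N + 1) (by omega), snoc_hi]
    have c2 : w3 ⟨N + 2, by omega⟩ = v2 := by
      rw [hw3, snoc_lt _ _ (N + 2) (by omega), snoc_hi]
    have c3 : w3 ⟨N + 3, by omega⟩ = v3 := by
      rw [hw3, snoc_hi]
    have hw : S.pathWeight S.emp w3
        = S.pathWeight S.emp u * S.stepE (u (Fin.last N)) v1 * S.stepE v1 v2 * S.stepE v2 v3 := by
      rw [hw3, S.pathWeight_snoc, S.pathWeight_snoc, S.pathWeight_snoc]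
      rw [Fin.snoc_last, Fin.snoc_last]
    have hmem : w3 ∈ F ↔ G (u (Fin.last N)) v1 v2 v3 := by
      rw [hF]
      simp only [Set.mem_setOf_eq, c0, c1, c2, c3]
    show (if w3 ∈ F then S.pathWeight S.emp w3 else 0) = _
    by_cases hG : G (u (Fin.last N)) v1 v2 v3
    · rw [if_pos (hmem.mpr hG), if_pos hG, hw, mul_assoc, mul_assoc, mul_assoc]
    · rw [if_neg (fun hm => hG (hmem.mp hm)), if_neg hG, mul_zero]
  calc ∑' (v1 : S.Word) (v2 : S.Word) (v3 : S.Word),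
        f (Fin.snoc (Fin.snoc (Fin.snoc u v1 : Fin (N + 2) → S.Word) v2
            : Fin (N + 3) → S.Word) v3 : Fin (N + 4) → S.Word)
      = ∑' (v1 : S.Word) (v2 : S.Word) (v3 : S.Word), S.pathWeight S.emp u *
          (if G (u (Fin.last N)) v1 v2 v3 then
            S.stepE (u (Fin.last N)) v1 * S.stepE v1 v2 * S.stepE v2 v3 else 0) :=
        tsum_congr fun v1 => tsum_congr fun v2 => tsum_congr fun v3 => hval v1 v2 v3
    _ = S.pathWeight S.emp u * S.phi3 G (u (Fin.last N)) := by
        unfold phi3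
        simp only [ENNReal.tsum_mul_left]

lemma p1_to_root (a : V₁) (ha : a ≠ S.o₁) (hV₁ : ∀ x : V₁, x = S.o₁ ∨ x = a)
    (h1a : S.p₁ S.o₁ a = 1) (h1b : S.p₁ a a = 1) (z : V₁) : S.p₁ z S.o₁ = 0 := by
  have h2 := S.p₁_nonneg z S.o₁
  have hle : S.p₁ z S.o₁ + S.p₁ z a ≤ 1 := by
    have h := sum_le_hasSum {S.o₁, a} (fun i _ => S.p₁_nonneg z i) (S.p₁_rowSum z)
    rwa [Finset.sum_pair (Ne.symm ha)] at h
  have h1 : S.p₁ z a = 1 := by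
    rcases hV₁ z with rfl | rfl
    · exact h1a
    · exact h1b
  linarith

lemma p2_to_root (b c : V₂) (hb : b ≠ S.o₂) (hc : c ≠ S.o₂)
    (hV₂ : ∀ x : V₂, x = S.o₂ ∨ x = b ∨ x = c)
    (h2a : S.p₂ S.o₂ b = 1) (h2b : S.p₂ b c = 1) (h2c : S.p₂ c b = 1) (z : V₂) :
    S.p₂ z S.o₂ = 0 := by
  have key : ∀ w : V₂, w ≠ S.o₂ → S.p₂ z w = 1 → S.p₂ z S.o₂ = 0 := by
    intro w hw h1
    have h2 := S.p₂_nonneg z S.o₂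
    have hle : S.p₂ z S.o₂ + S.p₂ z w ≤ 1 := by
      have h := sum_le_hasSum {S.o₂, w} (fun i _ => S.p₂_nonneg z i) (S.p₂_rowSum z)
      rwa [Finset.sum_pair (Ne.symm hw)] at h
    linarith
  rcases hV₂ z with rfl | rfl | rfl
  · exact key b hb h2a
  · exact key c hc h2b
  · exact key b hb h2c

lemma stepE_to_emp (h1 : ∀ z, S.p₁ z S.o₁ = 0) (h2 : ∀ z, S.p₂ z S.o₂ = 0) (v : S.Word) :
    S.stepE v S.emp = 0 := by
  have hl1 : S.lastIn₁ S.emp = S.o₁ := rfl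
  have hl2 : S.lastIn₂ S.emp = S.o₂ := rfl
  have hp1 : S.pbar₁ v S.emp = 0 := by
    unfold pbar₁
    rw [hl1, h1, ite_self]
  have hp2 : S.pbar₂ v S.emp = 0 := by
    unfold pbar₂
    rw [hl2, h2, ite_self]
  unfold stepE step
  rw [hp1, hp2, mul_zero, mul_zero, add_zero, ENNReal.ofReal_zero]

lemma pathWeight_emp_last {N : ℕ} (hN : 1 ≤ N) (x : S.Word)
    (hse : ∀ v, S.stepE v S.emp = 0) (u : Fin (N + 1) → S.Word)
    (hu : u (Fin.last N) = S.emp) : S.pathWeight x u = 0 := by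
  obtain ⟨K, rfl⟩ : ∃ K, N = K + 1 := ⟨N - 1, by omega⟩
  unfold pathWeight
  have hz : S.stepE (u (Fin.last K).castSucc) (u (Fin.last K).succ) = 0 := by
    rw [Fin.succ_last, hu]
    exact hse _
  rw [Finset.prod_eq_zero (Finset.mem_univ (Fin.last K)) hz, mul_zero]

lemma chain_concat (l : List S.Letter) (hl : l.Chain' fun a b => S.ltype a ≠ S.ltype b)
    (γ : S.Letter) (h : ∀ g ∈ l.getLast?, S.ltype g ≠ S.ltype γ) :
    (l ++ [γ]).Chain' fun a b => S.ltype a ≠ S.ltype b := by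
  refine List.isChain_append.mpr ⟨hl, List.isChain_singleton γ, fun p hp q hq => ?_⟩
  have hqq : γ = q := by simpa using hq
  rw [← hqq]
  exact h p hp

lemma step_swap (l : List S.Letter) (β β' : {v : V₂ // v ≠ S.o₂}) (x y : S.Word)
    (hx : x.val = l ++ [S.inr' β]) (hy : y.val = l ++ [S.inr' β'])
    (hne : S.inr' β ≠ S.inr' β') :
    S.step x y = (1 - S.α) * S.p₂ β.val β'.val := by
  have hgx : x.val.getLast? = some (S.inr' β) := by rw [hx]; exact List.getLast?_concat
  have hgy : y.val.getLast? = some (S.inr' β') := by rw [hy]; exact List.getLast?_concat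
  have hltx : (x.val.getLast?).map S.ltype = some false := by rw [hgx]; rfl
  have hlty : (y.val.getLast?).map S.ltype = some false := by rw [hgy]; rfl
  have hsx : S.stripLast false x = l := by
    unfold stripLast
    rw [hltx, hx]
    simp
  have hsy : S.stripLast false y = l := by
    unfold stripLast
    rw [hlty, hy]
    simp
  have hsxT : S.stripLast true x = x.val := by
    unfold stripLast
    rw [hltx]
    simp
  have hsyT : S.stripLast true y = y.val := by
    unfold stripLast
    rw [hlty]
    simp
  have h1 : S.lastIn₂ x = β.val := by unfold lastIn₂; rw [hgx]; rfl
  have h2 : S.lastIn₂ y = β'.val := by unfold lastIn₂; rw [hgy]; rfl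
  have hp2 : S.pbar₂ x y = S.p₂ β.val β'.val := by
    unfold pbar₂
    rw [hsx, hsy, if_pos rfl, h1, h2]
  have hxy : x.val ≠ y.val := by
    rw [hx, hy]
    intro hEq
    have h3 := List.append_cancel_left hEq
    injection h3 with h4
    exact hne h4
  have hp1 : S.pbar₁ x y = 0 := by
    unfold pbar₁
    rw [hsxT, hsyT, if_neg hxy]
  unfold step
  rw [hp1, hp2, mul_zero, zero_add]

lemma step_append (x y : S.Word) (g : S.Letter) (hg : S.ltype g = true)
    (hgl : x.val.getLast? = some g) (β : {v : V₂ // v ≠ S.o₂})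
    (hy : y.val = x.val ++ [S.inr' β]) :
    S.step x y = (1 - S.α) * S.p₂ S.o₂ β.val := by
  have hgy : y.val.getLast? = some (S.inr' β) := by rw [hy]; exact List.getLast?_concat
  have hltx : (x.val.getLast?).map S.ltype = some true := by rw [hgl, Option.map_some, hg]
  have hlty : (y.val.getLast?).map S.ltype = some false := by rw [hgy]; rfl
  have hsxF : S.stripLast false x = x.val := by
    unfold stripLast
    rw [hltx]
    simp
  have hsyF : S.stripLast false y = x.val := by
    unfold stripLast
    rw [hlty, hy]
    simp
  have hsxT : S.stripLast true x = x.val.dropLast := by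
    unfold stripLast
    rw [hltx]
    simp
  have hsyT : S.stripLast true y = y.val := by
    unfold stripLast
    rw [hlty]
    simp
  have h1 : S.lastIn₂ x = S.o₂ := by
    unfold lastIn₂
    rw [hgl]
    cases g with
    | inl p => rfl
    | inr p => exact absurd hg (by simp [ltype])
  have h2 : S.lastIn₂ y = β.val := by unfold lastIn₂; rw [hgy]; rfl
  have hp2 : S.pbar₂ x y = S.p₂ S.o₂ β.val := by
    unfold pbar₂
    rw [hsxF, hsyF, if_pos rfl, h1, h2]
  have hxy : x.val.dropLast ≠ y.val := by
    intro hEq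
    have hlen := congrArg List.length hEq
    rw [List.length_dropLast, hy, List.length_append] at hlen
    rw [List.length_singleton] at hlen
    omega
  have hp1 : S.pbar₁ x y = 0 := by
    unfold pbar₁
    rw [hsxT, hsyT, if_neg hxy]
  unfold step
  rw [hp1, hp2, mul_zero, zero_add]

lemma stepE_eq_half (x y : S.Word) (h : S.step x y = 1 / 2) : S.stepE x y = 1 / 2 := by
  unfold stepE
  rw [h, ENNReal.ofReal_div_of_pos (by norm_num)]
  simp

end Setup

end AuxProofs

section AuxProofs2

lemma range_bound {α : Type} [DecidableEq α] (ω : ℕ → α) (n M : ℕ)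
    (hM : ∀ m, 1 ≤ m → m ≤ M → 3 * m + 3 ≤ n) (F : Finset ℕ)
    (hFsub : ∀ m ∈ F, 1 ≤ m ∧ m ≤ M)
    (hFcond : ∀ m ∈ F, ω (3 * m + 1) = ω (3 * m + 3) ∨ ω (3 * m) = ω (3 * m + 2)) :
    ((Finset.range (n + 1)).image ω).card + F.card ≤ n + 1 := by
  classical
  set t : ℕ → ℕ := fun m => if ω (3 * m) = ω (3 * m + 2) then 3 * m + 2 else 3 * m + 3 with ht
  have htb : ∀ m, 3 * m + 2 ≤ t m ∧ t m ≤ 3 * m + 3 := fun m => by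
    rw [ht]; dsimp only; split <;> omega
  set T := F.image t with hT
  have hTcard : T.card = F.card := Finset.card_image_of_injOn (fun m hm m' hm' h => by
    have h1 := htb m; have h2 := htb m'; omega)
  have hTsub : T ⊆ Finset.range (n + 1) := by
    intro j hj
    obtain ⟨m, hm, rfl⟩ := Finset.mem_image.mp hj
    obtain ⟨hm1, hm2⟩ := hFsub m hm
    have h3 := hM m hm1 hm2
    have h4 := htb m
    simp only [Finset.mem_range]; omega
  have key : ∀ j, j ∈ Finset.range (n + 1) → ω j ∈ (Finset.range (n + 1) \ T).image ω := by
    intro j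
    induction j using Nat.strong_induction_on with
    | _ j ih =>
      intro hj
      by_cases hjT : j ∈ T
      · obtain ⟨m, hm, hmj⟩ := Finset.mem_image.mp hjT
        by_cases hcm : ω (3 * m) = ω (3 * m + 2)
        · have hj2 : j = 3 * m + 2 := by rw [← hmj, ht]; simp [hcm]
          have he : ω j = ω (3 * m) := by rw [hj2, hcm]
          rw [he]
          refine ih (3 * m) (by omega) ?_
          simp only [Finset.mem_range] at hj ⊢; omega
        · have hcc : ω (3 * m + 1) = ω (3 * m + 3) := (hFcond m hm).resolve_right hcm
          have hj2 : j = 3 * m + 3 := by rw [← hmj, ht]; simp [hcm]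
          have he : ω j = ω (3 * m + 1) := by rw [hj2, ← hcc]
          rw [he]
          refine ih (3 * m + 1) (by omega) ?_
          simp only [Finset.mem_range] at hj ⊢; omega
      · exact Finset.mem_image.mpr ⟨j, Finset.mem_sdiff.mpr ⟨hj, hjT⟩, rfl⟩
  have himg : (Finset.range (n + 1)).image ω ⊆ (Finset.range (n + 1) \ T).image ω := by
    intro y hy; obtain ⟨j, hj, rfl⟩ := Finset.mem_image.mp hy; exact key j hj
  have h1 : ((Finset.range (n + 1)).image ω).card ≤ (n + 1) - T.card := by
    calc ((Finset.range (n + 1)).image ω).card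
        ≤ ((Finset.range (n + 1) \ T).image ω).card := Finset.card_le_card himg
      _ ≤ (Finset.range (n + 1) \ T).card := Finset.card_image_le
      _ = (n + 1) - T.card := by rw [Finset.card_sdiff_of_subset hTsub, Finset.card_range]
  have hTle : T.card ≤ n + 1 := by
    have := Finset.card_le_card hTsub
    rwa [Finset.card_range] at this
  omega

namespace Setup

variable {V₁ V₂ : Type} [Countable V₁] [Countable V₂] [DecidableEq V₁] [DecidableEq V₂]
variable (S : Setup V₁ V₂)

lemma measurableSet_eq_coord (i j : ℕ) : MeasurableSet {ω : ℕ → S.Word | ω i = ω j} := by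
  have h : {ω : ℕ → S.Word | ω i = ω j}
      = ⋃ v : S.Word, ((fun ω : ℕ → S.Word => ω i) ⁻¹' {v}) ∩ ((fun ω : ℕ → S.Word => ω j) ⁻¹' {v}) := by
    ext ω
    simp only [Set.mem_setOf_eq, Set.mem_iUnion, Set.mem_inter_iff, Set.mem_preimage,
      Set.mem_singleton_iff]
    exact ⟨fun h => ⟨ω j, h, rfl⟩, fun ⟨v, h1, h2⟩ => h1.trans h2.symm⟩
  rw [h]
  exact MeasurableSet.iUnion fun v =>
    (measurable_pi_apply i (S.measurableSet_word {v})).inter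
      (measurable_pi_apply j (S.measurableSet_word {v}))

/-- the event predicate underlying `Aₙ` -/
def GA (la lb lc : S.Letter) (x v1 v2 v3 : S.Word) : Prop :=
  ((S.lastLetter x = some la ∧ S.lastLetter v1 = some lb ∧ v1 = v3) ∨
    (S.lastLetter x = some lb ∧ x = v2)) ∨
    (S.lastLetter x = some lc ∧ S.lastLetter v1 = some lb ∧ v1 = v3)

lemma phi3_ge_of (G : S.Word → S.Word → S.Word → S.Word → Prop) (x v1 v2 v3 : S.Word)
    (hG : G x v1 v2 v3) (h1 : S.stepE x v1 = 1 / 2) (h2 : S.stepE v1 v2 = 1 / 2)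
    (h3 : S.stepE v2 v3 = 1 / 2) : (1 / 8 : ℝ≥0∞) ≤ S.phi3 G x := by
  classical
  have hterm : (1 / 8 : ℝ≥0∞)
      = (if G x v1 v2 v3 then S.stepE x v1 * S.stepE v1 v2 * S.stepE v2 v3 else 0) := by
    rw [if_pos hG, h1, h2, h3, one_div, one_div,
      ← ENNReal.mul_inv (by norm_num) (by norm_num),
      ← ENNReal.mul_inv (by norm_num) (by norm_num)]
    norm_num
  calc (1 / 8 : ℝ≥0∞)
      = (if G x v1 v2 v3 then S.stepE x v1 * S.stepE v1 v2 * S.stepE v2 v3 else 0) := hterm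
    _ ≤ ∑' v3' : S.Word,
        (if G x v1 v2 v3' then S.stepE x v1 * S.stepE v1 v2 * S.stepE v2 v3' else 0) :=
          ENNReal.le_tsum v3
    _ ≤ ∑' (v2' : S.Word) (v3' : S.Word),
        (if G x v1 v2' v3' then S.stepE x v1 * S.stepE v1 v2' * S.stepE v2' v3' else 0) :=
          ENNReal.le_tsum v2
    _ ≤ S.phi3 G x := ENNReal.le_tsum v1

lemma phi3_ge (a : V₁) (b c : V₂) (ha : a ≠ S.o₁) (hb : b ≠ S.o₂) (hc : c ≠ S.o₂)
    (hbc : b ≠ c) (hV₁ : ∀ x : V₁, x = S.o₁ ∨ x = a) (hV₂ : ∀ x : V₂, x = S.o₂ ∨ x = b ∨ x = c)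
    (h2a : S.p₂ S.o₂ b = 1) (h2b : S.p₂ b c = 1) (h2c : S.p₂ c b = 1) (hα : S.α = 1 / 2)
    (x : S.Word) (hx : x ≠ S.emp) :
    (1 / 8 : ℝ≥0∞) ≤ S.phi3 (S.GA (Sum.inl ⟨a, ha⟩) (Sum.inr ⟨b, hb⟩) (Sum.inr ⟨c, hc⟩)) x := by
  have hhalf : 1 - S.α = (1 : ℝ) / 2 := by rw [hα]; norm_num
  have hxv : x.val ≠ [] := fun h => hx (Subtype.ext h)
  have hgl : x.val.getLast? = some (x.val.getLast hxv) := List.getLast?_eq_getLast hxv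
  have hsplit : x.val.dropLast ++ [x.val.getLast hxv] = x.val := List.dropLast_append_getLast hxv
  have hbcL : S.inr' ⟨b, hb⟩ ≠ S.inr' ⟨c, hc⟩ := by
    intro h
    have h' : (Sum.inr ⟨b, hb⟩ : {v : V₁ // v ≠ S.o₁} ⊕ {v : V₂ // v ≠ S.o₂})
        = Sum.inr ⟨c, hc⟩ := h
    injection h' with h2
    exact hbc (congrArg Subtype.val h2)
  have hcbL : S.inr' ⟨c, hc⟩ ≠ S.inr' ⟨b, hb⟩ := fun h => hbcL h.symm
  cases hG : x.val.getLast hxv with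
  | inl p =>
    obtain ⟨a', ha'⟩ := p
    have haa : a = a' := ((hV₁ a').resolve_left ha').symm
    subst haa
    rw [hG] at hgl hsplit
    have hch1 : (x.val ++ [S.inr' ⟨b, hb⟩]).Chain'
        (fun p q => S.ltype p ≠ S.ltype q) := by
      refine S.chain_concat x.val x.2 _ fun g hg => ?_
      rw [hgl] at hg
      simp only [Option.mem_def, Option.some.injEq] at hg
      cases hg
      simp [ltype, inr']
    have hch2 : (x.val ++ [S.inr' ⟨c, hc⟩]).Chain'
        (fun p q => S.ltype p ≠ S.ltype q) := by
      refine S.chain_concat x.val x.2 _ fun g hg => ?_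
      rw [hgl] at hg
      simp only [Option.mem_def, Option.some.injEq] at hg
      cases hg
      simp [ltype, inr']
    set v1 : S.Word := S.mkWord (x.val ++ [S.inr' ⟨b, hb⟩]) hch1 with hv1
    set v2 : S.Word := S.mkWord (x.val ++ [S.inr' ⟨c, hc⟩]) hch2 with hv2
    have hGA : S.GA (Sum.inl ⟨a, ha⟩) (Sum.inr ⟨b, hb⟩) (Sum.inr ⟨c, hc⟩) x v1 v2 v1 := by
      refine Or.inl (Or.inl ⟨hgl, ?_, rfl⟩)
      show v1.val.getLast? = _
      rw [hv1]
      exact List.getLast?_concat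
    have s1 : S.step x v1 = 1 / 2 := by
      have h := S.step_append x v1 (Sum.inl ⟨a, ha'⟩) rfl hgl ⟨b, hb⟩ rfl
      rw [h, h2a, mul_one, hhalf]
    have s2 : S.step v1 v2 = 1 / 2 := by
      have h : S.step v1 v2 = (1 - S.α) * S.p₂ b c :=
        S.step_swap x.val ⟨b, hb⟩ ⟨c, hc⟩ v1 v2 rfl rfl hbcL
      rw [h, h2b, mul_one, hhalf]
    have s3 : S.step v2 v1 = 1 / 2 := by
      have h : S.step v2 v1 = (1 - S.α) * S.p₂ c b :=
        S.step_swap x.val ⟨c, hc⟩ ⟨b, hb⟩ v2 v1 rfl rfl hcbL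
      rw [h, h2c, mul_one, hhalf]
    exact S.phi3_ge_of _ x v1 v2 v1 hGA (S.stepE_eq_half _ _ s1) (S.stepE_eq_half _ _ s2)
      (S.stepE_eq_half _ _ s3)
  | inr p =>
    obtain ⟨b', hb'⟩ := p
    rw [hG] at hgl hsplit
    have hchx : (x.val.dropLast ++ [S.inr' ⟨b', hb'⟩]).Chain'
        (fun p q => S.ltype p ≠ S.ltype q) := by
      rw [show x.val.dropLast ++ [S.inr' ⟨b', hb'⟩] = x.val from hsplit]
      exact x.2
    obtain ⟨hcd, -, hcomp⟩ := List.isChain_append.mp hchx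
    rcases (hV₂ b').resolve_left hb' with rfl | rfl
    · -- last letter is b
      have hch1 : (x.val.dropLast ++ [S.inr' ⟨c, hc⟩]).Chain'
          (fun p q => S.ltype p ≠ S.ltype q) := by
        refine S.chain_concat _ hcd _ fun g hg => ?_
        exact hcomp g hg (S.inr' ⟨b', hb'⟩) (by simp)
      set v1 : S.Word := S.mkWord (x.val.dropLast ++ [S.inr' ⟨c, hc⟩]) hch1 with hv1
      have hGA : S.GA (Sum.inl ⟨a, ha⟩) (Sum.inr ⟨b', hb⟩) (Sum.inr ⟨c, hc⟩) x v1 x v1 :=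
        Or.inl (Or.inr ⟨hgl, rfl⟩)
      have s1 : S.step x v1 = 1 / 2 := by
        have h : S.step x v1 = (1 - S.α) * S.p₂ b' c :=
          S.step_swap x.val.dropLast ⟨b', hb'⟩ ⟨c, hc⟩ x v1 hsplit.symm rfl hbcL
        rw [h, h2b, mul_one, hhalf]
      have s2 : S.step v1 x = 1 / 2 := by
        have h : S.step v1 x = (1 - S.α) * S.p₂ c b' :=
          S.step_swap x.val.dropLast ⟨c, hc⟩ ⟨b', hb'⟩ v1 x rfl hsplit.symm hcbL
        rw [h, h2c, mul_one, hhalf]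
      exact S.phi3_ge_of _ x v1 x v1 hGA (S.stepE_eq_half _ _ s1) (S.stepE_eq_half _ _ s2)
        (S.stepE_eq_half _ _ s1)
    · -- last letter is c
      have hch1 : (x.val.dropLast ++ [S.inr' ⟨b, hb⟩]).Chain'
          (fun p q => S.ltype p ≠ S.ltype q) := by
        refine S.chain_concat _ hcd _ fun g hg => ?_
        exact hcomp g hg (S.inr' ⟨b', hb'⟩) (by simp)
      set v1 : S.Word := S.mkWord (x.val.dropLast ++ [S.inr' ⟨b, hb⟩]) hch1 with hv1
      have hGA : S.GA (Sum.inl ⟨a, ha⟩) (Sum.inr ⟨b, hb⟩) (Sum.inr ⟨b', hc⟩) x v1 x v1 := by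
        refine Or.inr ⟨hgl, ?_, rfl⟩
        show v1.val.getLast? = _
        rw [hv1]
        exact List.getLast?_concat
      have s1 : S.step x v1 = 1 / 2 := by
        have h : S.step x v1 = (1 - S.α) * S.p₂ b' b :=
          S.step_swap x.val.dropLast ⟨b', hb'⟩ ⟨b, hb⟩ x v1 hsplit.symm rfl hcbL
        rw [h, h2c, mul_one, hhalf]
      have s2 : S.step v1 x = 1 / 2 := by
        have h : S.step v1 x = (1 - S.α) * S.p₂ b b' :=
          S.step_swap x.val.dropLast ⟨b, hb⟩ ⟨b', hb'⟩ v1 x rfl hsplit.symm hbcL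
        rw [h, h2b, mul_one, hhalf]
      exact S.phi3_ge_of _ x v1 x v1 hGA (S.stepE_eq_half _ _ s1) (S.stepE_eq_half _ _ s2)
        (S.stepE_eq_half _ _ s1)

end Setup

end AuxProofs2

section LemA

lemma lemA {V₁ V₂ : Type} [Countable V₁] [Countable V₂] [DecidableEq V₁] [DecidableEq V₂]
    (S : Setup V₁ V₂) (X : RW S) (a : V₁) (b c : V₂)
    (ha : a ≠ S.o₁) (hb : b ≠ S.o₂) (hc : c ≠ S.o₂) (hbc : b ≠ c)
    (hV₁ : ∀ x : V₁, x = S.o₁ ∨ x = a)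
    (hV₂ : ∀ x : V₂, x = S.o₂ ∨ x = b ∨ x = c)
    (h1a : S.p₁ S.o₁ a = 1) (h1b : S.p₁ a a = 1)
    (h2a : S.p₂ S.o₂ b = 1) (h2b : S.p₂ b c = 1) (h2c : S.p₂ c b = 1)
    (hα : S.α = 1 / 2) :
    ∀ n : ℕ, 1 ≤ n →
      (1 / 8 : ℝ≥0∞) ≤ X.P S.emp (
        {ω | S.lastLetter (ω (3 * n)) = some (Sum.inl ⟨a, ha⟩) ∧
             S.lastLetter (ω (3 * n + 1)) = some (Sum.inr ⟨b, hb⟩) ∧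
             ω (3 * n + 1) = ω (3 * n + 3)} ∪
        {ω | S.lastLetter (ω (3 * n)) = some (Sum.inr ⟨b, hb⟩) ∧
             ω (3 * n) = ω (3 * n + 2)} ∪
        {ω | S.lastLetter (ω (3 * n)) = some (Sum.inr ⟨c, hc⟩) ∧
             S.lastLetter (ω (3 * n + 1)) = some (Sum.inr ⟨b, hb⟩) ∧
             ω (3 * n + 1) = ω (3 * n + 3)}) := by
  intro n hn
  have hse : ∀ v, S.stepE v S.emp = 0 :=
    S.stepE_to_emp (S.p1_to_root a ha hV₁ h1a h1b) (S.p2_to_root b c hb hc hV₂ h2a h2b h2c)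
  have hU : ({ω | S.lastLetter (ω (3 * n)) = some (Sum.inl ⟨a, ha⟩) ∧
             S.lastLetter (ω (3 * n + 1)) = some (Sum.inr ⟨b, hb⟩) ∧
             ω (3 * n + 1) = ω (3 * n + 3)} ∪
        {ω | S.lastLetter (ω (3 * n)) = some (Sum.inr ⟨b, hb⟩) ∧
             ω (3 * n) = ω (3 * n + 2)} ∪
        {ω | S.lastLetter (ω (3 * n)) = some (Sum.inr ⟨c, hc⟩) ∧
             S.lastLetter (ω (3 * n + 1)) = some (Sum.inr ⟨b, hb⟩) ∧
             ω (3 * n + 1) = ω (3 * n + 3)})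
      = {ω : ℕ → S.Word | S.GA (Sum.inl ⟨a, ha⟩) (Sum.inr ⟨b, hb⟩) (Sum.inr ⟨c, hc⟩)
          (ω (3 * n)) (ω (3 * n + 1)) (ω (3 * n + 2)) (ω (3 * n + 3))} := rfl
  rw [hU, S.P_event4 X (3 * n) (S.GA (Sum.inl ⟨a, ha⟩) (Sum.inr ⟨b, hb⟩) (Sum.inr ⟨c, hc⟩))]
  have hpt : ∀ u : Fin (3 * n + 1) → S.Word,
      S.pathWeight S.emp u * (1 / 8)
        ≤ S.pathWeight S.emp u * S.phi3
            (S.GA (Sum.inl ⟨a, ha⟩) (Sum.inr ⟨b, hb⟩) (Sum.inr ⟨c, hc⟩))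
            (u (Fin.last (3 * n))) := by
    intro u
    by_cases hu : u (Fin.last (3 * n)) = S.emp
    · rw [S.pathWeight_emp_last (by omega) S.emp hse u hu, zero_mul, zero_mul]
    · exact mul_le_mul_right
        (S.phi3_ge a b c ha hb hc hbc hV₁ hV₂ h2a h2b h2c hα _ hu) _
  calc (1 / 8 : ℝ≥0∞)
      = (∑' u : Fin (3 * n + 1) → S.Word, S.pathWeight S.emp u) * (1 / 8) := by
        rw [S.tsum_pathWeight X S.emp (3 * n), one_mul]
    _ = ∑' u : Fin (3 * n + 1) → S.Word, S.pathWeight S.emp u * (1 / 8) :=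
        ENNReal.tsum_mul_right.symm
    _ ≤ _ := ENNReal.tsum_le_tsum hpt

end LemA

/-- in the example `V₁ = {o₁,a}`, `V₂ = {o₂,b,c}` with
`p₁(o₁,a) = p₁(a,a) = 1`, `p₂(o₂,b) = p₂(b,c) = p₂(c,b) = 1` and `α = 1/2`:
`P(Aₙ) ≥ 1/8` for every `n ≥ 1`, and consequently
`limsup E[Rₙ]/n ≤ 23/24 < 1`, so the asymptotic range is strictly smaller than
`1 − P[∃ n ≥ 1 : Xₙ = o] = 1` and the group-case formula fails. -/
theorem example_group_formula_fails
    {V₁ V₂ : Type} [Countable V₁] [Countable V₂] [DecidableEq V₁] [DecidableEq V₂]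
    (S : Setup V₁ V₂) (X : RW S) (a : V₁) (b c : V₂)
    (ha : a ≠ S.o₁) (hb : b ≠ S.o₂) (hc : c ≠ S.o₂) (hbc : b ≠ c)
    (hV₁ : ∀ x : V₁, x = S.o₁ ∨ x = a)
    (hV₂ : ∀ x : V₂, x = S.o₂ ∨ x = b ∨ x = c)
    (h1a : S.p₁ S.o₁ a = 1) (h1b : S.p₁ a a = 1)
    (h2a : S.p₂ S.o₂ b = 1) (h2b : S.p₂ b c = 1) (h2c : S.p₂ c b = 1)
    (hα : S.α = 1 / 2) :
    (∀ n : ℕ, 1 ≤ n →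
      (1 / 8 : ℝ≥0∞) ≤ X.P S.emp (
        {ω | S.lastLetter (ω (3 * n)) = some (Sum.inl ⟨a, ha⟩) ∧
             S.lastLetter (ω (3 * n + 1)) = some (Sum.inr ⟨b, hb⟩) ∧
             ω (3 * n + 1) = ω (3 * n + 3)} ∪
        {ω | S.lastLetter (ω (3 * n)) = some (Sum.inr ⟨b, hb⟩) ∧
             ω (3 * n) = ω (3 * n + 2)} ∪
        {ω | S.lastLetter (ω (3 * n)) = some (Sum.inr ⟨c, hc⟩) ∧
             S.lastLetter (ω (3 * n + 1)) = some (Sum.inr ⟨b, hb⟩) ∧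
             ω (3 * n + 1) = ω (3 * n + 3)})) ∧
    Filter.atTop.limsup
      (fun n : ℕ => (∫⁻ ω, (S.rangeCount n ω : ℝ≥0∞) ∂X.P S.emp) / (n : ℝ≥0∞))
      ≤ 23 / 24 ∧
    (23 / 24 : ℝ≥0∞) < 1 - X.P S.emp {ω | ∃ n, 1 ≤ n ∧ ω n = S.emp} := by
  
  classical
  haveI := X.prob S.emp
  have hA := lemA S X a b c ha hb hc hbc hV₁ hV₂ h1a h1b h2a h2b h2c hα
  refine ⟨hA, ?_, ?_⟩
  · -- limsup bound
    have meas_cond : ∀ m : ℕ, MeasurableSet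
        {ω : ℕ → S.Word | ω (3 * m + 1) = ω (3 * m + 3) ∨ ω (3 * m) = ω (3 * m + 2)} :=
      fun m => (S.measurableSet_eq_coord (3 * m + 1) (3 * m + 3)).union
        (S.measurableSet_eq_coord (3 * m) (3 * m + 2))
    have int_bound : ∀ n : ℕ,
        (∫⁻ ω, (S.rangeCount n ω : ℝ≥0∞) ∂X.P S.emp)
          + ((n / 3 - 1 : ℕ) : ℝ≥0∞) * (1 / 8) ≤ (n : ℝ≥0∞) + 1 := by
      intro n
      have hmeas : ∀ m : ℕ, Measurable (fun ω : ℕ → S.Word =>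
          if ω (3 * m + 1) = ω (3 * m + 3) ∨ ω (3 * m) = ω (3 * m + 2) then (1 : ℝ≥0∞) else 0) :=
        fun m => Measurable.ite (meas_cond m) measurable_const measurable_const
      have hsum_meas : Measurable (fun ω : ℕ → S.Word => ∑ m ∈ Finset.Icc 1 (n / 3 - 1),
          if ω (3 * m + 1) = ω (3 * m + 3) ∨ ω (3 * m) = ω (3 * m + 2) then (1 : ℝ≥0∞) else 0) := by
        apply Finset.measurable_sum
        exact fun m _ => hmeas m
      have step1 : ((n / 3 - 1 : ℕ) : ℝ≥0∞) * (1 / 8)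
          ≤ ∑ m ∈ Finset.Icc 1 (n / 3 - 1),
              X.P S.emp {ω | ω (3 * m + 1) = ω (3 * m + 3) ∨ ω (3 * m) = ω (3 * m + 2)} := by
        have hper : ∀ m ∈ Finset.Icc 1 (n / 3 - 1), (1 / 8 : ℝ≥0∞)
            ≤ X.P S.emp {ω | ω (3 * m + 1) = ω (3 * m + 3) ∨ ω (3 * m) = ω (3 * m + 2)} := by
          intro m hm
          refine le_trans (hA m (Finset.mem_Icc.mp hm).1) (measure_mono ?_)
          rintro ω ((h1 | h2) | h3)
          · exact Or.inl h1.2.2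
          · exact Or.inr h2.2
          · exact Or.inl h3.2.2
        calc ((n / 3 - 1 : ℕ) : ℝ≥0∞) * (1 / 8)
            = ∑ _m ∈ Finset.Icc 1 (n / 3 - 1), (1 / 8 : ℝ≥0∞) := by
              rw [Finset.sum_const, Nat.card_Icc, nsmul_eq_mul]
              norm_num
          _ ≤ _ := Finset.sum_le_sum hper
      have step2 : ∑ m ∈ Finset.Icc 1 (n / 3 - 1),
            X.P S.emp {ω | ω (3 * m + 1) = ω (3 * m + 3) ∨ ω (3 * m) = ω (3 * m + 2)}
          = ∫⁻ ω, (∑ m ∈ Finset.Icc 1 (n / 3 - 1),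
              if ω (3 * m + 1) = ω (3 * m + 3) ∨ ω (3 * m) = ω (3 * m + 2) then (1 : ℝ≥0∞) else 0)
              ∂X.P S.emp := by
        rw [lintegral_finset_sum _ (fun m _ => hmeas m)]
        refine Finset.sum_congr rfl fun m _ => ?_
        have hhi : (fun ω : ℕ → S.Word =>
            if ω (3 * m + 1) = ω (3 * m + 3) ∨ ω (3 * m) = ω (3 * m + 2) then (1 : ℝ≥0∞) else 0)
            = Set.indicator
                {ω : ℕ → S.Word | ω (3 * m + 1) = ω (3 * m + 3) ∨ ω (3 * m) = ω (3 * m + 2)}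
                1 := by
          funext ω
          rw [Set.indicator_apply]
          rfl
        rw [hhi, lintegral_indicator_one (meas_cond m)]
      have step3 : (∫⁻ ω, (S.rangeCount n ω : ℝ≥0∞) ∂X.P S.emp)
          + (∫⁻ ω, (∑ m ∈ Finset.Icc 1 (n / 3 - 1),
              if ω (3 * m + 1) = ω (3 * m + 3) ∨ ω (3 * m) = ω (3 * m + 2) then (1 : ℝ≥0∞) else 0)
              ∂X.P S.emp) ≤ (n : ℝ≥0∞) + 1 := by
        rw [← lintegral_add_right _ hsum_meas]
        have hpt : ∀ ω : ℕ → S.Word, (S.rangeCount n ω : ℝ≥0∞)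
            + (∑ m ∈ Finset.Icc 1 (n / 3 - 1),
              if ω (3 * m + 1) = ω (3 * m + 3) ∨ ω (3 * m) = ω (3 * m + 2) then (1 : ℝ≥0∞) else 0)
            ≤ (n : ℝ≥0∞) + 1 := by
          intro ω
          have hfilter : (∑ m ∈ Finset.Icc 1 (n / 3 - 1),
              if ω (3 * m + 1) = ω (3 * m + 3) ∨ ω (3 * m) = ω (3 * m + 2) then (1 : ℝ≥0∞) else 0)
              = (((Finset.Icc 1 (n / 3 - 1)).filter
                  (fun m => ω (3 * m + 1) = ω (3 * m + 3) ∨ ω (3 * m) = ω (3 * m + 2))).card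
                  : ℝ≥0∞) :=
            Finset.sum_boole _ _
          have hnat := range_bound ω n (n / 3 - 1) (fun m h1 h2 => by omega)
            ((Finset.Icc 1 (n / 3 - 1)).filter
              (fun m => ω (3 * m + 1) = ω (3 * m + 3) ∨ ω (3 * m) = ω (3 * m + 2)))
            (fun m hm => Finset.mem_Icc.mp (Finset.mem_filter.mp hm).1)
            (fun m hm => (Finset.mem_filter.mp hm).2)
          have hrc : S.rangeCount n ω = ((Finset.range (n + 1)).image ω).card := rfl
          rw [hfilter, hrc, ← Nat.cast_add]
          calc ((((Finset.range (n + 1)).image ω).card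
                + ((Finset.Icc 1 (n / 3 - 1)).filter
                  (fun m => ω (3 * m + 1) = ω (3 * m + 3) ∨ ω (3 * m) = ω (3 * m + 2))).card
                : ℕ) : ℝ≥0∞)
              ≤ ((n + 1 : ℕ) : ℝ≥0∞) := Nat.cast_le.mpr hnat
            _ = (n : ℝ≥0∞) + 1 := by push_cast; rfl
        calc ∫⁻ ω, ((S.rangeCount n ω : ℝ≥0∞)
              + ∑ m ∈ Finset.Icc 1 (n / 3 - 1),
                if ω (3 * m + 1) = ω (3 * m + 3) ∨ ω (3 * m) = ω (3 * m + 2) then (1 : ℝ≥0∞) else 0)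
              ∂X.P S.emp
            ≤ ∫⁻ _ω, ((n : ℝ≥0∞) + 1) ∂X.P S.emp := lintegral_mono hpt
          _ = (n : ℝ≥0∞) + 1 := by rw [lintegral_const, measure_univ, mul_one]
      exact le_trans (add_le_add_right (step1.trans (le_of_eq step2)) _) step3
    have key2 : ∀ n : ℕ, 1 ≤ n →
        (∫⁻ ω, (S.rangeCount n ω : ℝ≥0∞) ∂X.P S.emp) / (n : ℝ≥0∞)
          ≤ 23 / 24 + 29 / (n : ℝ≥0∞) := by
      intro n hn
      have hn0 : (n : ℝ≥0∞) ≠ 0 := Nat.cast_ne_zero.mpr (by omega)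
      have hnt : (n : ℝ≥0∞) ≠ ⊤ := ENNReal.natCast_ne_top n
      rw [ENNReal.div_le_iff_le_mul (Or.inl hn0) (Or.inl hnt)]
      have hmul : (23 / 24 + 29 / (n : ℝ≥0∞)) * n = 23 * (n : ℝ≥0∞) / 24 + 29 := by
        rw [add_mul, ENNReal.div_mul_cancel hn0 hnt, div_eq_mul_inv, div_eq_mul_inv,
          mul_right_comm]
      rw [hmul]
      have hnum : 23 * (n : ℝ≥0∞) / 24 + 29 + ((n / 3 - 1 : ℕ) : ℝ≥0∞) * (1 / 8)
          = ((23 * n + 696 + 3 * (n / 3 - 1) : ℕ) : ℝ≥0∞) / 24 := by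
        have e1 : ((n / 3 - 1 : ℕ) : ℝ≥0∞) * (1 / 8)
            = ((3 * (n / 3 - 1) : ℕ) : ℝ≥0∞) / 24 := by
          rw [mul_one_div,
            show ((3 * (n / 3 - 1) : ℕ) : ℝ≥0∞) = 3 * ((n / 3 - 1 : ℕ) : ℝ≥0∞) by push_cast; ring,
            show (24 : ℝ≥0∞) = 3 * 8 by norm_num,
            ENNReal.mul_div_mul_left _ _ (by norm_num) (by norm_num)]
        have e2 : (29 : ℝ≥0∞) = ((696 : ℕ) : ℝ≥0∞) / 24 := by
          rw [ENNReal.eq_div_iff (by norm_num) (by norm_num)]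
          norm_num
        have e3 : 23 * (n : ℝ≥0∞) = ((23 * n : ℕ) : ℝ≥0∞) := by push_cast; ring
        rw [e1, e3, e2, ENNReal.div_add_div_same, ENNReal.div_add_div_same]
        congr 1
        push_cast
        ring
      have hfin : ((n / 3 - 1 : ℕ) : ℝ≥0∞) * (1 / 8) ≠ ⊤ :=
        ENNReal.mul_ne_top (ENNReal.natCast_ne_top _) (by norm_num)
      refine (ENNReal.add_le_add_iff_right hfin).mp ((int_bound n).trans ?_)
      rw [hnum, ENNReal.le_div_iff_mul_le (Or.inl (by norm_num)) (Or.inl (by norm_num))]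
      have hnat2 : (n + 1) * 24 ≤ 23 * n + 696 + 3 * (n / 3 - 1) := by omega
      calc ((n : ℝ≥0∞) + 1) * 24 = (((n + 1) * 24 : ℕ) : ℝ≥0∞) := by push_cast; ring
        _ ≤ _ := Nat.cast_le.mpr hnat2
    refine ENNReal.le_of_forall_pos_le_add fun ε hε _ => ?_
    have hεE : (0 : ℝ≥0∞) < ε := ENNReal.coe_pos.mpr hε
    have h0 : Filter.Tendsto (fun n : ℕ => (29 : ℝ≥0∞) / (n : ℝ≥0∞)) Filter.atTop (nhds 0) := by
      have h1 := ENNReal.Tendsto.const_mul ENNReal.tendsto_inv_nat_nhds_zero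
        (Or.inr (by norm_num : (29 : ℝ≥0∞) ≠ ⊤))
      simpa [div_eq_mul_inv] using h1
    have hevlt : ∀ᶠ n : ℕ in Filter.atTop, (29 : ℝ≥0∞) / (n : ℝ≥0∞) < ε :=
      h0.eventually_lt_const hεE
    refine Filter.limsup_le_of_le (by isBoundedDefault) ?_
    filter_upwards [hevlt, Filter.eventually_ge_atTop 1] with n hlt hn1
    exact (key2 n hn1).trans (add_le_add_right hlt.le _)
  · -- the return probability is zero
    have hse : ∀ v, S.stepE v S.emp = 0 :=
      S.stepE_to_emp (S.p1_to_root a ha hV₁ h1a h1b) (S.p2_to_root b c hb hc hV₂ h2a h2b h2c)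
    have hret : X.P S.emp {ω | ∃ n, 1 ≤ n ∧ ω n = S.emp} = 0 := by
      have hcup : {ω : ℕ → S.Word | ∃ n, 1 ≤ n ∧ ω n = S.emp}
          = ⋃ n : ℕ, {ω : ℕ → S.Word | 1 ≤ n ∧ ω n = S.emp} := by
        ext ω
        simp only [Set.mem_setOf_eq, Set.mem_iUnion]
      rw [hcup]
      refine measure_iUnion_null fun n => ?_
      rcases Nat.eq_zero_or_pos n with rfl | hn
      · have he : {ω : ℕ → S.Word | 1 ≤ 0 ∧ ω 0 = S.emp} = ∅ := by
          ext ω; simp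
        rw [he]
        exact measure_empty
      · refine measure_mono_null (t := {ω : ℕ → S.Word | ω n = S.emp}) (fun ω h => h.2) ?_
        have hceq : {ω : ℕ → S.Word | ω n = S.emp}
            = {ω : ℕ → S.Word | (fun i : Fin (n + 1) => ω (i : ℕ))
                ∈ {w : Fin (n + 1) → S.Word | w (Fin.last n) = S.emp}} := rfl
        rw [hceq, S.P_eq_tsum X S.emp]
        rw [ENNReal.tsum_eq_zero]
        exact fun w => S.pathWeight_emp_last hn S.emp hse _ w.2
    rw [hret, tsub_zero]
    rw [ENNReal.div_lt_iff (by norm_num) (by norm_num)]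
    norm_num
end
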